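/- Let i ≥ 5 and let w_1, w_2 be words of the Jacquard language J_l, with l ≥ i−3, satisfying: (1) β_i(w_1) > β_i(w_2); (2) β_{i-1}(w_1') ≥ β_{i-1}(w_2'); (3) β_i(w_1) − β_{i-1}(w_1') ≥ β_i(w_2) − β_{i-1}(w_2'). Then, for every integer k ≥ 1 and every word w of length k such that both w_1 w and w_2 w belong to J_{k+l}, one has β_{i+k}(w_1 w) > β_{i+k}(w_2 w). (Lemma 5.6 of the paper.) -/

import Mathlib

/-- The Jacquard languages: `Jacquard 0 = {ε}`, `Jacquard 1 = {a₀}`, and, for `n ≥ 2`,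
`Jacquard n = Jacquard (n-1)·a₀ ∪ ⋃_{1 ≤ j ≤ n-1} Jacquard (n-j)·(a₁a₂⋯a_j)`,
where a letter `a_j` is modeled by the natural number `j` and a word by a list. -/
def Jacquard : ℕ → Set (List ℕ)
  | 0 => {[]}
  | 1 => {[0]}
  | n + 2 =>
      ((· ++ [0]) '' Jacquard (n + 1)) ∪
        ⋃ (j : ℕ) (_ : 1 ≤ j ∧ j ≤ n + 1),
          (· ++ (List.range j).map (· + 1)) '' Jacquard (n + 2 - j)
  termination_by n => n
  decreasing_by all_goals omega

/-- Jean's functions `β_i` on words (the shift `w'` of a word is `w.dropLast`):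
`β₂ = 1`, `β₃ = 2`, `β₄ = 3`, and, for `i ≥ 5`,
`β_i(w) = β_{i-1}(w') + β_{i-2}(w'')` if the last letter of `w` is `a₁`,
`β_i(w) = 2β_{i-1}(w') - β_{i-2}(w'')` if the last letter of `w` is `a_k`, `k ≥ 2`,
`β_i(w) = β_{i-1}(w') + 1` otherwise (i.e. `w` empty or ending with `a₀`).
(The unused values `β₀` and `β₁` are set to `0`.) -/
def beta : ℕ → List ℕ → ℤ
  | 0, _ => 0
  | 1, _ => 0
  | 2, _ => 1
  | 3, _ => 2
  | 4, _ => 3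
  | i + 5, w =>
      match w.getLast? with
      | some 1 => beta (i + 4) w.dropLast + beta (i + 3) w.dropLast.dropLast
      | some (_ + 2) => 2 * beta (i + 4) w.dropLast - beta (i + 3) w.dropLast.dropLast
      | _ => beta (i + 4) w.dropLast + 1

lemma beta_concat (m : ℕ) (u : List ℕ) (a : ℕ) :
    beta (m + 5) (u ++ [a]) =
      if a = 0 then beta (m + 4) u + 1
      else if a = 1 then beta (m + 4) u + beta (m + 3) u.dropLast
      else 2 * beta (m + 4) u - beta (m + 3) u.dropLast := by
  have hg : (u ++ [a]).getLast? = some a := List.getLast?_concat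
  have hd : (u ++ [a]).dropLast = u := List.dropLast_concat
  rw [beta, hg, hd]
  rcases a with _ | _ | b
  · simp
  · simp
  · simp

lemma beta_key (m : ℕ) (w₁ w₂ : List ℕ)
    (h1 : beta (m + 5) w₁ > beta (m + 5) w₂)
    (h2 : beta (m + 4) w₁.dropLast ≥ beta (m + 4) w₂.dropLast)
    (h3 : beta (m + 5) w₁ - beta (m + 4) w₁.dropLast ≥
          beta (m + 5) w₂ - beta (m + 4) w₂.dropLast)
    (w : List ℕ) :
    beta (m + 5 + w.length) (w₁ ++ w) > beta (m + 5 + w.length) (w₂ ++ w) ∧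
    beta (m + 4 + w.length) (w₁ ++ w).dropLast ≥ beta (m + 4 + w.length) (w₂ ++ w).dropLast ∧
    beta (m + 5 + w.length) (w₁ ++ w) - beta (m + 4 + w.length) (w₁ ++ w).dropLast ≥
      beta (m + 5 + w.length) (w₂ ++ w) - beta (m + 4 + w.length) (w₂ ++ w).dropLast := by
  induction w using List.reverseRecOn with
  | nil =>
    simp only [List.length_nil, Nat.add_zero, List.append_nil]
    exact ⟨h1, h2, h3⟩
  | append_singleton v a ih =>
    obtain ⟨ih1, ih2, ih3⟩ := ih
    have E : ∀ u : List ℕ, u ++ (v ++ [a]) = (u ++ v) ++ [a] :=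
      fun u => (List.append_assoc u v [a]).symm
    rw [E, E, List.length_append, List.length_singleton,
      show m + 5 + (v.length + 1) = (m + v.length + 1) + 5 from by omega,
      show m + 4 + (v.length + 1) = (m + v.length + 1) + 4 from by omega,
      beta_concat, beta_concat, List.dropLast_concat, List.dropLast_concat,
      show m + v.length + 1 + 4 = m + 5 + v.length from by omega,
      show m + v.length + 1 + 3 = m + 4 + v.length from by omega]
    rcases a with _ | _ | b
    · norm_num
      exact ⟨ih1, ih1.le⟩
    · simp only [Nat.zero_add, if_neg one_ne_zero, if_pos]
      refine ⟨by linarith, by linarith, by linarith⟩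
    · have hb0 : ¬ (b + 2 = 0) := by omega
      have hb1 : ¬ (b + 2 = 1) := by omega
      rw [if_neg hb0, if_neg hb1, if_neg hb0, if_neg hb1]
      refine ⟨by linarith, by linarith, by linarith⟩

/-- Lemma 5.6: let `i ≥ 5` and let `w₁, w₂ ∈ J_l`, `l ≥ i - 3`, satisfy
`β_i(w₁) > β_i(w₂)`, `β_{i-1}(w₁') ≥ β_{i-1}(w₂')`, and
`β_i(w₁) - β_{i-1}(w₁') ≥ β_i(w₂) - β_{i-1}(w₂')`. Then, for every `k ≥ 1` and every
word `w` of length `k` such that `w₁w` and `w₂w` belong to `J_{k+l}`, one has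
`β_{i+k}(w₁w) > β_{i+k}(w₂w)`. -/
theorem beta_append_mono (i : ℕ) (hi : 5 ≤ i) (l : ℕ) (hl : i - 3 ≤ l)
    (w₁ w₂ : List ℕ) (hw₁ : w₁ ∈ Jacquard l) (hw₂ : w₂ ∈ Jacquard l)
    (h1 : beta i w₁ > beta i w₂)
    (h2 : beta (i - 1) w₁.dropLast ≥ beta (i - 1) w₂.dropLast)
    (h3 : beta i w₁ - beta (i - 1) w₁.dropLast ≥ beta i w₂ - beta (i - 1) w₂.dropLast)
    (k : ℕ) (hk : 1 ≤ k) (w : List ℕ) (hw : w.length = k)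
    (hw₁w : w₁ ++ w ∈ Jacquard (k + l)) (hw₂w : w₂ ++ w ∈ Jacquard (k + l)) :
    beta (i + k) (w₁ ++ w) > beta (i + k) (w₂ ++ w) := by
  obtain ⟨m, rfl⟩ : ∃ m, i = m + 5 := ⟨i - 5, by omega⟩
  rw [show m + 5 - 1 = m + 4 from by omega] at h2 h3
  have := (beta_key m w₁ w₂ h1 h2 h3 w).1
  rwa [hw] at this
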